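/- Let $m\geq 0$, $a>0$, $p>1$, and $\nu>0$ satisfy $2 - mp + m > 0$, $2-mp+m < ap$, and $2-mp+m-ap \leq \nu p - \nu - a$. Then for any $y\in\mathbb{R}$ and any $z\geq |y|$, $\int_z^\infty (x+y)^{1-mp+m}(1+x)^{-ap}\,dx \leq C(a,m,p)\,(1+z)^{\nu p-\nu-a}$. -/

import Mathlib

open MeasureTheory Real

section AuxLemmas
open Set Filter Topology


lemma aux1 (s z : ℝ) (hs : s < -1) (hz : 0 ≤ z) :
    IntegrableOn (fun x => (1+x) ^ s) (Set.Ioi z) ∧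
    (∫ x in Set.Ioi z, (1+x) ^ s) = (1+z) ^ (s+1) / (-(s+1)) := by
  have hs0 : s + 1 ≠ 0 := by intro h; linarith [h]
  have hderiv : ∀ x ∈ Set.Ici z, HasDerivAt (fun x => (1+x) ^ (s+1) / (s+1)) ((1+x) ^ s) x := by
    intro x hx
    have hx0 : (0:ℝ) < 1 + x := by have := hx.out; linarith
    have h1 : HasDerivAt (fun x : ℝ => 1 + x) 1 x := (hasDerivAt_id x).const_add 1
    have h2 := (h1.rpow_const (p := s+1) (Or.inl hx0.ne')).div_const (s+1)
    refine h2.congr_deriv ?_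
    rw [add_sub_cancel_right]
    field_simp
  have htends : Tendsto (fun x => (1+x) ^ (s+1) / (s+1)) atTop (𝓝 (0 / (s+1))) := by
    apply Tendsto.div_const
    have h1 : Tendsto (fun x : ℝ => 1 + x) atTop atTop :=
      tendsto_atTop_add_const_left _ 1 tendsto_id
    have h2 := (tendsto_rpow_neg_atTop (by linarith : (0:ℝ) < -(s+1))).comp h1
    simpa [Function.comp_def, neg_neg] using h2
  have hpos : ∀ x ∈ Set.Ioi z, 0 ≤ (1+x) ^ s := by
    intro x hx
    exact rpow_nonneg (by have := hx.out; linarith) _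
  refine ⟨integrableOn_Ioi_deriv_of_nonneg' hderiv hpos htends, ?_⟩
  rw [integral_Ioi_of_hasDerivAt_of_nonneg' hderiv hpos htends]
  rw [zero_div, zero_sub, div_neg]

lemma aux2 (r z : ℝ) (hr : -1 < r) (hz : 0 ≤ z) :
    IntegrableOn (fun x => (x - z) ^ r) (Set.Ioc z (1+2*z)) ∧
    (∫ x in Set.Ioc z (1+2*z), (x - z) ^ r) = (1+z) ^ (r+1) / (r+1) := by
  have hle : z ≤ 1 + 2*z := by linarith
  have hii : IntervalIntegrable (fun x => (x - z) ^ r) volume z (1+2*z) := by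
    have h := (intervalIntegral.intervalIntegrable_rpow' (a := 0) (b := 1+z) hr).comp_sub_right z
    have e2 : (0:ℝ) + z = z := by ring
    have e3 : 1 + z + z = 1 + 2*z := by ring
    rwa [e2, e3] at h
  refine ⟨hii.1, ?_⟩
  rw [← intervalIntegral.integral_of_le hle,
    intervalIntegral.integral_comp_sub_right (fun t => t ^ r) z]
  have e1 : z - z = 0 := by ring
  have e2 : 1 + 2*z - z = 1 + z := by ring
  open intervalIntegral in
  rw [e1, e2, integral_rpow (Or.inl hr), Real.zero_rpow (by linarith : r + 1 ≠ 0), sub_zero]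

end AuxLemmas

theorem stmt_3 (m a p ν : ℝ) (hm : 0 ≤ m) (ha : 0 < a) (hp : 1 < p) (hν : 0 < ν)
    (h1 : 0 < 2 - m * p + m) (h2 : 2 - m * p + m < a * p)
    (h3 : 2 - m * p + m - a * p ≤ ν * p - ν - a) :
    ∃ C : ℝ, 0 < C ∧ ∀ y z : ℝ, |y| ≤ z →
      (∫ x in Set.Ioi z, (x + y) ^ (1 - m * p + m) * (1 + x) ^ (-(a * p))) ≤
        C * (1 + z) ^ (ν * p - ν - a) := by
  have hp0 : 0 < p := by linarith
  have hap : 0 < a * p := mul_pos ha hp0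
  set A : ℝ := 1 - m * p + m with hA
  have hA1 : -1 < A := by rw [hA]; linarith
  have hAp : A - a * p < -1 := by rw [hA]; linarith
  have hC1 : 0 < A + 1 := by linarith
  have hC2 : 0 < a * p - A - 1 := by rw [hA]; linarith
  set C : ℝ := 1 / (A + 1) + 2 ^ |A| / (a * p - A - 1) with hC
  have hCpos : 0 < C :=
    add_pos (div_pos one_pos hC1) (div_pos (rpow_pos_of_pos two_pos _) hC2)
  refine ⟨C, hCpos, fun y z hyz => ?_⟩
  have hz : 0 ≤ z := le_trans (abs_nonneg y) hyz
  have h1z : (0:ℝ) < 1 + z := by linarith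
  obtain ⟨hi2, hv2⟩ := aux1 (A - a * p) z hAp hz
  obtain ⟨hi1, hv1⟩ := aux2 A z hA1 hz
  set s : Set ℝ := Set.Ioc z (1 + 2 * z) with hs
  set g1 : ℝ → ℝ := s.indicator (fun x => (1 + z) ^ (-(a * p)) * (x - z) ^ A) with hg1
  set g2 : ℝ → ℝ := fun x => 2 ^ |A| * (1 + x) ^ (A - a * p) with hg2
  have hsub : s ⊆ Set.Ioi z := Set.Ioc_subset_Ioi_self
  have hsm : MeasurableSet s := measurableSet_Ioc
  have hint1 : Integrable g1 (volume.restrict (Set.Ioi z)) := by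
    have h' : IntegrableOn (fun x => (1 + z) ^ (-(a * p)) * (x - z) ^ A) s := hi1.const_mul _
    exact ((integrable_indicator_iff hsm).2 h').integrableOn
  have hint2 : Integrable g2 (volume.restrict (Set.Ioi z)) := hi2.const_mul _
  have hnn : 0 ≤ᵐ[volume.restrict (Set.Ioi z)]
      (fun x => (x + y) ^ A * (1 + x) ^ (-(a * p))) := by
    filter_upwards [ae_restrict_mem measurableSet_Ioi] with x hx
    have hzx : z < x := hx
    exact mul_nonneg (rpow_nonneg (by linarith [neg_abs_le y]) _)
      (rpow_nonneg (by linarith) _)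
  have hEx : A + -(a * p) = A - a * p := by ring
  have hle : (fun x => (x + y) ^ A * (1 + x) ^ (-(a * p))) ≤ᵐ[volume.restrict (Set.Ioi z)]
      g1 + g2 := by
    filter_upwards [ae_restrict_mem measurableSet_Ioi] with x hx
    have hzx : z < x := hx
    have hxy : 0 < x + y := by linarith [neg_abs_le y]
    have hx0 : (0:ℝ) < 1 + x := by linarith
    have hg1nn : 0 ≤ g1 x :=
      Set.indicator_nonneg (fun t ht => mul_nonneg (rpow_nonneg h1z.le _)
        (rpow_nonneg (by linarith [ht.1] : (0:ℝ) ≤ t - z) _)) x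
    have hg2nn : 0 ≤ g2 x := mul_nonneg (rpow_nonneg (by norm_num) _) (rpow_nonneg hx0.le _)
    show (x + y) ^ A * (1 + x) ^ (-(a * p)) ≤ g1 x + g2 x
    rcases le_or_gt 0 A with hα | hα
    · have step1 : (x + y) ^ A ≤ (2 * (1 + x)) ^ A :=
        rpow_le_rpow hxy.le (by linarith [le_abs_self y]) hα
      have step2 : (2 * (1 + x)) ^ A = 2 ^ A * (1 + x) ^ A := mul_rpow (by norm_num) hx0.le
      calc (x + y) ^ A * (1 + x) ^ (-(a * p))
          ≤ (2 * (1 + x)) ^ A * (1 + x) ^ (-(a * p)) :=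
            mul_le_mul_of_nonneg_right step1 (rpow_nonneg hx0.le _)
        _ = 2 ^ A * ((1 + x) ^ A * (1 + x) ^ (-(a * p))) := by rw [step2]; ring
        _ = 2 ^ A * (1 + x) ^ (A - a * p) := by rw [← Real.rpow_add hx0, hEx]
        _ ≤ g2 x := mul_le_mul_of_nonneg_right
            (Real.rpow_le_rpow_of_exponent_le one_le_two (le_abs_self A))
            (rpow_nonneg hx0.le _)
        _ ≤ g1 x + g2 x := le_add_of_nonneg_left hg1nn
    · have hxz : (0:ℝ) < x - z := by linarith
      have hb : (x + y) ^ A ≤ (x - z) ^ A :=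
        Real.rpow_le_rpow_of_nonpos hxz (by linarith [neg_abs_le y]) hα.le
      rcases le_or_gt x (1 + 2 * z) with hc | hc
      · have hmem : x ∈ s := ⟨hzx, hc⟩
        have h4 : (1 + x) ^ (-(a * p)) ≤ (1 + z) ^ (-(a * p)) :=
          Real.rpow_le_rpow_of_nonpos h1z (by linarith) (by linarith : -(a * p) ≤ 0)
        calc (x + y) ^ A * (1 + x) ^ (-(a * p))
            ≤ (x - z) ^ A * (1 + z) ^ (-(a * p)) :=
              mul_le_mul hb h4 (rpow_nonneg hx0.le _) (rpow_nonneg hxz.le _)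
          _ = g1 x := by rw [hg1, Set.indicator_of_mem hmem]; ring
          _ ≤ g1 x + g2 x := le_add_of_nonneg_right hg2nn
      · have h5 : (1 + x) / 2 ≤ x - z := by linarith
        have h6 : (x - z) ^ A ≤ ((1 + x) / 2) ^ A :=
          Real.rpow_le_rpow_of_nonpos (by linarith : (0:ℝ) < (1 + x) / 2) h5 hα.le
        have h7 : ((1 + x) / 2) ^ A = (1 + x) ^ A / 2 ^ A :=
          Real.div_rpow (y := 2) hx0.le (by norm_num) A
        have h8 : (1 + x) ^ A / 2 ^ A = 2 ^ (-A) * (1 + x) ^ A := by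
          rw [Real.rpow_neg (by norm_num : (0:ℝ) ≤ 2)]; ring
        have h9 : -A = |A| := (abs_of_neg hα).symm
        calc (x + y) ^ A * (1 + x) ^ (-(a * p))
            ≤ ((1 + x) / 2) ^ A * (1 + x) ^ (-(a * p)) :=
              mul_le_mul_of_nonneg_right (hb.trans h6) (rpow_nonneg hx0.le _)
          _ = 2 ^ |A| * ((1 + x) ^ A * (1 + x) ^ (-(a * p))) := by rw [h7, h8, h9]; ring
          _ = g2 x := by rw [← Real.rpow_add hx0, hEx]
          _ ≤ g1 x + g2 x := le_add_of_nonneg_left hg1nn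
  have hmono := integral_mono_of_nonneg hnn (hint1.add hint2) hle
  have eadd : (∫ x in Set.Ioi z, (g1 + g2) x) =
      (∫ x in Set.Ioi z, g1 x) + ∫ x in Set.Ioi z, g2 x := by
    simpa using integral_add hint1 hint2
  have e1 : (∫ x in Set.Ioi z, g1 x) = (1 + z) ^ (-(a * p)) * ((1 + z) ^ (A + 1) / (A + 1)) := by
    rw [hg1, integral_indicator hsm, Measure.restrict_restrict hsm,
      Set.inter_eq_left.2 hsub, integral_const_mul, hv1]
  have e2 : (∫ x in Set.Ioi z, g2 x) =
      2 ^ |A| * ((1 + z) ^ (A - a * p + 1) / (-(A - a * p + 1))) := by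
    simp only [hg2]
    rw [integral_const_mul, hv2]
  have epow : (1 + z) ^ (-(a * p)) * (1 + z) ^ (A + 1) = (1 + z) ^ (A + 1 - a * p) := by
    rw [← Real.rpow_add h1z]; congr 1; ring
  have e3 : (∫ x in Set.Ioi z, (g1 + g2) x) = C * (1 + z) ^ (A + 1 - a * p) := by
    rw [eadd, e1, e2, hC]
    have h11 : -(A - a * p + 1) = a * p - A - 1 := by ring
    have h10 : (1 + z) ^ (A - a * p + 1) = (1 + z) ^ (A + 1 - a * p) := by congr 1; ring
    rw [h11, h10, mul_div_assoc', epow]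
    have hne1 : A + 1 ≠ 0 := hC1.ne'
    have hne2 : a * p - A - 1 ≠ 0 := hC2.ne'
    field_simp
  calc (∫ x in Set.Ioi z, (x + y) ^ A * (1 + x) ^ (-(a * p)))
      ≤ ∫ x in Set.Ioi z, (g1 + g2) x := hmono
    _ = C * (1 + z) ^ (A + 1 - a * p) := e3
    _ ≤ C * (1 + z) ^ (ν * p - ν - a) := by
        refine mul_le_mul_of_nonneg_left ?_ hCpos.le
        refine Real.rpow_le_rpow_of_exponent_le (by linarith) ?_
        rw [hA]; linarith
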